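/- Let n ≥ 1 and r ∈ (0,1). The n×n matrix T* defined by (T*)_{ij} = 0 for i < j, (T*)_{ii} = r, and (T*)_{ij} = (1−r²)(−r)^{i−j−1} for i > j, satisfies ‖T*‖ ≤ 1 and its spectrum equals {r}; in particular ρ(T*) = r. -/

import Mathlib

/-- The operator norm of a complex `n × n` matrix induced by the Euclidean norm on `ℂⁿ`. -/
noncomputable def matNorm {n : ℕ} (T : Matrix (Fin n) (Fin n) ℂ) : ℝ :=
  ‖Matrix.toEuclideanCLM (𝕜 := ℂ) T‖

/-- The `n × n` lower-triangular Toeplitz matrix `T*` with `r` on the diagonal and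
`(1 - r²)(-r)^(i - j - 1)` below the diagonal. -/
noncomputable def Tstar (n : ℕ) (r : ℝ) : Matrix (Fin n) (Fin n) ℂ :=
  Matrix.of fun i j =>
    if (i : ℕ) < (j : ℕ) then 0
    else if (i : ℕ) = (j : ℕ) then (r : ℂ)
    else ((1 : ℂ) - (r : ℂ) ^ 2) * (-(r : ℂ)) ^ ((i : ℕ) - (j : ℕ) - 1)

/-- The lower shift matrix. -/
noncomputable def Sh (n : ℕ) : Matrix (Fin n) (Fin n) ℂ :=
  Matrix.of fun i j => if (i : ℕ) = (j : ℕ) + 1 then 1 else 0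

lemma mulSh {n : ℕ} (A : Matrix (Fin n) (Fin n) ℂ) (i j : Fin n) :
    (A * Sh n) i j = if h : (j : ℕ) + 1 < n then A i ⟨(j : ℕ) + 1, h⟩ else 0 := by
  rw [Matrix.mul_apply]
  split_ifs with h
  · rw [Finset.sum_eq_single (⟨(j:ℕ)+1, h⟩ : Fin n)]
    · simp [Sh]
    · intro k _ hk
      have : (k : ℕ) ≠ (j : ℕ) + 1 := fun hc => hk (Fin.ext hc)
      simp [Sh, this]
    · simp
  · apply Finset.sum_eq_zero
    intro k _
    have : (k : ℕ) ≠ (j : ℕ) + 1 := by omega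
    simp [Sh, this]

lemma keyfact (n : ℕ) (r : ℝ) :
    Tstar n r * (1 + (r : ℂ) • Sh n) = (r : ℂ) • 1 + Sh n := by
  ext i j
  rw [Matrix.mul_add, Matrix.mul_smul, Matrix.mul_one]
  rw [Matrix.add_apply, Matrix.smul_apply, mulSh, Matrix.add_apply, Matrix.smul_apply]
  simp only [Tstar, Sh, Matrix.of_apply, Matrix.one_apply, smul_eq_mul, Fin.val_mk]
  by_cases h : (j : ℕ) + 1 < n
  · rw [dif_pos h]
    rcases lt_trichotomy (i : ℕ) (j : ℕ) with hij | hij | hij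
    · have h1 : i ≠ j := fun h => by omega
      rw [if_pos hij, if_pos (show (i:ℕ) < (j:ℕ)+1 by omega), if_neg h1,
        if_neg (show (i:ℕ) ≠ (j:ℕ)+1 by omega)]
      ring
    · have h1 : i = j := Fin.ext hij
      rw [if_neg (by omega : ¬ (i:ℕ) < (j:ℕ)), if_pos hij,
        if_pos (show (i:ℕ) < (j:ℕ)+1 by omega), if_pos h1,
        if_neg (show (i:ℕ) ≠ (j:ℕ)+1 by omega)]
      ring
    · have h1 : i ≠ j := fun h => by omega
      rw [if_neg (by omega : ¬ (i:ℕ) < (j:ℕ)), if_neg (by omega : ¬ (i:ℕ) = (j:ℕ)),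
        if_neg (by omega : ¬ (i:ℕ) < (j:ℕ)+1), if_neg h1]
      by_cases he : (i:ℕ) = (j:ℕ)+1
      · rw [if_pos he, if_pos he, show (i:ℕ) - (j:ℕ) - 1 = 0 by omega]
        ring
      · rw [if_neg he, if_neg he]
        rw [show (i:ℕ) - (j:ℕ) - 1 = ((i:ℕ) - ((j:ℕ)+1) - 1) + 1 by omega, pow_succ]
        ring
  · rw [dif_neg h]
    rcases lt_trichotomy (i : ℕ) (j : ℕ) with hij | hij | hij
    · have h1 : i ≠ j := fun h => by omega
      rw [if_pos hij, if_neg h1, if_neg (show (i:ℕ) ≠ (j:ℕ)+1 by omega)]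
      ring
    · have h1 : i = j := Fin.ext hij
      rw [if_neg (by omega : ¬ (i:ℕ) < (j:ℕ)), if_pos hij, if_pos h1,
        if_neg (show (i:ℕ) ≠ (j:ℕ)+1 by omega)]
      ring
    · exact absurd i.isLt (by omega)

noncomputable def prev {n : ℕ} (y : Fin n → ℂ) (i : Fin n) : ℂ :=
  if 0 < (i : ℕ) then y ⟨(i : ℕ) - 1, lt_of_le_of_lt (Nat.sub_le _ _) i.isLt⟩ else 0

lemma shVec {n : ℕ} (y : Fin n → ℂ) : (Sh n).mulVec y = prev y := by
  funext i
  rw [Matrix.mulVec, dotProduct]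
  unfold prev
  split_ifs with h
  · rw [Finset.sum_eq_single (⟨(i:ℕ)-1, lt_of_le_of_lt (Nat.sub_le _ _) i.isLt⟩ : Fin n)]
    · simp only [Sh, Matrix.of_apply, Fin.val_mk]
      rw [if_pos (by omega)]
      ring
    · intro k _ hk
      have : (i : ℕ) ≠ (k : ℕ) + 1 := by
        intro hc
        apply hk
        apply Fin.ext
        simp only [Fin.val_mk]
        omega
      simp [Sh, this]
    · simp
  · apply Finset.sum_eq_zero
    intro k _
    have : (i : ℕ) ≠ (k : ℕ) + 1 := by omega
    simp [Sh, this]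

lemma ptwise (r : ℝ) (z w : ℂ) :
    ‖z + (r:ℂ) * w‖^2 - ‖(r:ℂ) * z + w‖^2 = (1 - r^2) * (‖z‖^2 - ‖w‖^2) := by
  have h : ∀ u : ℂ, ‖u‖^2 = u.re^2 + u.im^2 := by
    intro u
    rw [Complex.sq_norm, Complex.normSq_apply]
    ring
  simp only [h, Complex.add_re, Complex.add_im, Complex.mul_re, Complex.mul_im,
    Complex.ofReal_re, Complex.ofReal_im]
  ring

lemma sq_norm_sum {n : ℕ} (r : ℝ) (hn : 1 ≤ n) (y : Fin n → ℂ) :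
    ∑ i, ‖y i + (r:ℂ) * prev y i‖^2 =
      (∑ i, ‖(r:ℂ) * y i + prev y i‖^2) + (1 - r^2) * ‖y ⟨n-1, by omega⟩‖^2 := by
  obtain ⟨m, rfl⟩ : ∃ m, n = m + 1 := ⟨n - 1, by omega⟩
  have key : ∑ i, (‖y i + (r:ℂ) * prev y i‖^2 - ‖(r:ℂ) * y i + prev y i‖^2)
      = (1 - r^2) * ‖y ⟨m, by omega⟩‖^2 := by
    simp only [ptwise]
    rw [← Finset.mul_sum]
    congr 1
    rw [Finset.sum_sub_distrib]
    have h1 : ∑ i : Fin (m+1), ‖prev y i‖^2 = ∑ i : Fin m, ‖y i.castSucc‖^2 := by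
      rw [Fin.sum_univ_succ]
      have h0 : prev y 0 = 0 := by simp [prev]
      rw [h0]
      simp only [norm_zero, ne_eq, OfNat.ofNat_ne_zero, not_false_eq_true, zero_pow, zero_add]
      apply Finset.sum_congr rfl
      intro i _
      have : prev y i.succ = y i.castSucc := by
        unfold prev
        rw [if_pos (by simp)]
        apply congrArg
        exact Fin.ext (by simp)
      rw [this]
    have h2 : ∑ i : Fin (m+1), ‖y i‖^2
        = (∑ i : Fin m, ‖y i.castSucc‖^2) + ‖y (Fin.last m)‖^2 := Fin.sum_univ_castSucc _
    rw [h1, h2]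
    have : (⟨m, by omega⟩ : Fin (m+1)) = Fin.last m := rfl
    rw [this]
    ring
  rw [Finset.sum_sub_distrib] at key
  simp only [Nat.add_sub_cancel]
  linarith [key]

lemma B_lower (n : ℕ) (r : ℝ) :
    ((1 : Matrix (Fin n) (Fin n) ℂ) + (r:ℂ) • Sh n).BlockTriangular OrderDual.toDual := by
  intro i j hij
  have hij' : (i : ℕ) < (j : ℕ) := hij
  have h1 : i ≠ j := fun h => by omega
  have h2 : (i : ℕ) ≠ (j : ℕ) + 1 := by omega
  simp [Matrix.one_apply_ne h1, Sh, h2]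

lemma B_det (n : ℕ) (r : ℝ) : ((1 : Matrix (Fin n) (Fin n) ℂ) + (r:ℂ) • Sh n).det = 1 := by
  rw [Matrix.det_of_lowerTriangular _ (B_lower n r)]
  have : ∀ i : Fin n, ((1 : Matrix (Fin n) (Fin n) ℂ) + (r:ℂ) • Sh n) i i = 1 := by
    intro i
    have : (i : ℕ) ≠ (i : ℕ) + 1 := by omega
    simp [Matrix.one_apply_eq, Sh, this]
  exact Finset.prod_eq_one fun i _ => this i

lemma spec_Tstar (n : ℕ) (hn : 1 ≤ n) (r : ℝ) :
    spectrum ℂ (Tstar n r) = {(r : ℂ)} := by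
  ext μ
  rw [Set.mem_singleton_iff, spectrum.mem_iff, Matrix.isUnit_iff_isUnit_det]
  have htri : ((algebraMap ℂ (Matrix (Fin n) (Fin n) ℂ) μ) - Tstar n r).BlockTriangular
      OrderDual.toDual := by
    intro i j hij
    have hij' : (i : ℕ) < (j : ℕ) := hij
    have h1 : i ≠ j := fun h => by omega
    simp only [Matrix.sub_apply, Matrix.algebraMap_eq_diagonal, Matrix.diagonal_apply_ne _ h1,
      Tstar, Matrix.of_apply, if_pos hij']
    ring
  rw [Matrix.det_of_lowerTriangular _ htri]
  have hd : ∀ i : Fin n, ((algebraMap ℂ (Matrix (Fin n) (Fin n) ℂ) μ) - Tstar n r) i i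
      = μ - (r : ℂ) := by
    intro i
    simp [Matrix.algebraMap_eq_diagonal, Tstar]
  simp only [hd, Finset.prod_const, Finset.card_univ, Fintype.card_fin]
  rw [isUnit_iff_ne_zero]
  constructor
  · intro h
    by_contra hne
    exact h (pow_ne_zero n (sub_ne_zero.mpr fun hc => hne (by rw [hc])))
  · intro h
    rw [h]
    simp [pow_eq_zero_iff (by omega : n ≠ 0)]

lemma norm_Tstar_le (n : ℕ) (hn : 1 ≤ n) (r : ℝ) (hr : r ∈ Set.Ioo (0:ℝ) 1) :
    matNorm (Tstar n r) ≤ 1 := by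
  apply ContinuousLinearMap.opNorm_le_bound _ zero_le_one
  intro x
  rw [one_mul]
  set B : Matrix (Fin n) (Fin n) ℂ := 1 + (r:ℂ) • Sh n with hB
  have hunit : IsUnit B.det := by rw [B_det]; exact isUnit_one
  set y : Fin n → ℂ := B⁻¹.mulVec (WithLp.equiv 2 (Fin n → ℂ) x) with hy
  have hxy : B.mulVec y = WithLp.equiv 2 (Fin n → ℂ) x := by
    rw [hy, Matrix.mulVec_mulVec, Matrix.mul_nonsing_inv _ hunit, Matrix.one_mulVec]
  -- action of the CLM
  have happ : ∀ (A : Matrix (Fin n) (Fin n) ℂ),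
      Matrix.toEuclideanCLM (𝕜 := ℂ) A x
        = (WithLp.equiv 2 (Fin n → ℂ)).symm (A.mulVec (WithLp.equiv 2 (Fin n → ℂ) x)) := by
    intro A
    apply (WithLp.equiv 2 (Fin n → ℂ)).injective
    rw [Equiv.apply_symm_apply]
    exact Matrix.ofLp_toEuclideanCLM A x
  have hBv : B.mulVec y = fun i => y i + (r:ℂ) * prev y i := by
    rw [hB, Matrix.add_mulVec, Matrix.one_mulVec, Matrix.smul_mulVec, shVec]
    funext i
    simp
  have hCv : (Tstar n r).mulVec (B.mulVec y) = fun i => (r:ℂ) * y i + prev y i := by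
    rw [Matrix.mulVec_mulVec, keyfact, Matrix.add_mulVec, Matrix.smul_mulVec,
      Matrix.one_mulVec, shVec]
    funext i
    simp
  have hnorm : ∀ v : Fin n → ℂ,
      ‖(WithLp.equiv 2 (Fin n → ℂ)).symm v‖ = Real.sqrt (∑ i, ‖v i‖^2) := by
    intro v
    rw [EuclideanSpace.norm_eq]
    simp only [WithLp.equiv_symm_apply, WithLp.ofLp_toLp]
  rw [happ, ← hxy, hCv, hnorm]
  have hxeq : x = (WithLp.equiv 2 (Fin n → ℂ)).symm (B.mulVec y) := by
    rw [hxy]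
    exact ((WithLp.equiv 2 (Fin n → ℂ)).symm_apply_apply x).symm
  have hx' : ‖x‖ = Real.sqrt (∑ i, ‖y i + (r:ℂ) * prev y i‖^2) := by
    rw [hxeq, hnorm]
    congr 1
    apply Finset.sum_congr rfl
    intro i _
    rw [hBv]
  rw [hx']
  apply Real.sqrt_le_sqrt
  have hs := sq_norm_sum r hn y
  have hr2 : 0 ≤ (1 - r^2) * ‖y ⟨n-1, by omega⟩‖^2 := by
    apply mul_nonneg
    · nlinarith [hr.1, hr.2]
    · positivity
  linarith [hs, hr2]

theorem stmt1 (n : ℕ) (hn : 1 ≤ n) (r : ℝ) (hr : r ∈ Set.Ioo (0 : ℝ) 1) :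
    matNorm (Tstar n r) ≤ 1 ∧ spectrum ℂ (Tstar n r) = {(r : ℂ)} ∧
      spectralRadius ℂ (Tstar n r) = ENNReal.ofReal r := by
  refine ⟨norm_Tstar_le n hn r hr, spec_Tstar n hn r, ?_⟩
  rw [spectralRadius, spec_Tstar n hn r]
  simp only [Set.mem_singleton_iff, iSup_iSup_eq_left]
  rw [← Real.enorm_eq_ofReal hr.1.le]
  congr 1
  simp [nnnorm]
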